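/- arXiv:2602.06826 — 4 statements merged into one kernel-verified Lean document; each statement's English description precedes it below -/
import Mathlib

section
/- Let P be a nonconstant polynomial with complex coefficients. Then every root of the derivative P' lies in the convex hull of the set of roots of P. -/
open Polynomial

/-- **Gauss–Lucas theorem.** Every root of the derivative of a nonconstant complex
polynomial lies in the convex hull of the set of roots of the polynomial. -/
theorem gauss_lucas (P : Polynomial ℂ) (hP : 0 < P.degree)
    (z : ℂ) (hz : P.derivative.IsRoot z) :
    z ∈ convexHull ℝ {w : ℂ | P.IsRoot w} := by
  classical
  have hP0 : P ≠ 0 := fun h => by simp [h] at hP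
  by_cases hz0 : P.IsRoot z
  · exact subset_convexHull ℝ _ hz0
  -- factor P over its roots
  set c := P.leadingCoeff with hc
  have hc0 : c ≠ 0 := leadingCoeff_ne_zero.2 hP0
  set S := P.roots with hS
  have hfact : P = C c * (S.map fun a => X - C a).prod :=
    Splits.eq_prod_roots (IsAlgClosed.splits P)
  -- each z - a is nonzero
  have hza : ∀ a ∈ S, z - a ≠ 0 := by
    intro a ha h
    have : z = a := by linear_combination h
    exact hz0 (this ▸ (isRoot_of_mem_roots ha))
  -- evaluate derivative at z
  have hQ : (S.map fun a => z - a).prod ≠ 0 :=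
    Multiset.prod_ne_zero (by simpa using hza)
  have hder : (S.map fun a => ((S.erase a).map fun b => z - b).prod).sum = 0 := by
    have h1 := congrArg (fun q => Polynomial.eval z q) (congrArg derivative hfact)
    simp only [derivative_mul, derivative_C, zero_mul, zero_add, eval_mul, eval_C,
      derivative_prod] at h1
    have h2 : P.derivative.eval z = 0 := hz
    rw [h2] at h1
    have h3 := (mul_eq_zero.mp h1.symm).resolve_left hc0
    rw [← h3, show (Polynomial.eval z : ℂ[X] → ℂ) = ⇑(evalRingHom z) from rfl,
      map_multiset_sum, Multiset.map_map]
    congr 1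
    refine Multiset.map_congr rfl fun a ha => ?_
    simp only [Function.comp_apply, map_mul, derivative_X_sub_C, map_one, mul_one,
      map_multiset_prod, Multiset.map_map]
    simp [Function.comp_def, coe_evalRingHom]
  -- rewrite each erased product as Q(z)/(z-a)
  have hsum : (S.map fun a => (z - a)⁻¹).sum = 0 := by
    have key : ∀ a ∈ S, ((S.erase a).map fun b => z - b).prod
        = (z - a)⁻¹ * (S.map fun b => z - b).prod := by
      intro a ha
      rw [← Multiset.prod_map_erase (f := fun b => z - b) ha, ← mul_assoc,
        inv_mul_cancel₀ (hza a ha), one_mul]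
    rw [Multiset.map_congr rfl key] at hder
    have : (S.map fun a => (z - a)⁻¹).sum * (S.map fun b => z - b).prod = 0 := by
      rw [← hder, ← Multiset.sum_map_mul_right]
    exact (mul_eq_zero.mp this).resolve_right hQ
  -- convert to a finset sum with counts
  set t := S.toFinset with ht
  have hfin : ∑ a ∈ t, (S.count a : ℂ) * (z - a)⁻¹ = 0 := by
    rw [← hsum, Finset.sum_multiset_map_count]
    simp [nsmul_eq_mul, ht]
  -- conjugate: get real-weighted combination
  set w : ℂ → ℝ := fun a => (S.count a : ℝ) * (Complex.normSq (z - a))⁻¹ with hw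
  have hwc : ∀ a ∈ t, (w a : ℂ) * (z - a) = (starRingEnd ℂ) ((S.count a : ℂ) * (z - a)⁻¹) := by
    intro a ha
    have hna : Complex.normSq (z - a) ≠ 0 :=
      (Complex.normSq_pos.2 (hza a (Multiset.mem_toFinset.mp ha))).ne'
    rw [map_mul, map_inv₀, Complex.inv_def, Complex.normSq_conj, map_natCast]
    push_cast [hw]
    rw [Complex.conj_conj]
    ring
  have hkey : ∑ a ∈ t, (w a : ℂ) * (z - a) = 0 := by
    rw [Finset.sum_congr rfl hwc, ← map_sum, hfin, map_zero]
  -- weights are nonneg with positive sum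
  have hw0 : ∀ a ∈ t, 0 ≤ w a := by
    intro a _
    exact mul_nonneg (Nat.cast_nonneg _) (inv_nonneg.2 (Complex.normSq_nonneg _))
  have hwpos : 0 < ∑ a ∈ t, w a := by
    obtain ⟨a, ha'⟩ := Complex.exists_root hP
    have ha : a ∈ S := by rw [hS, Polynomial.mem_roots hP0]; exact ha'
    have hat : a ∈ t := Multiset.mem_toFinset.mpr ha
    refine Finset.sum_pos' hw0 ⟨a, hat, ?_⟩
    exact mul_pos (by exact_mod_cast (Multiset.count_pos.mpr ha))
      (inv_pos.2 (Complex.normSq_pos.2 (hza a ha)))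
  -- z is the center of mass
  have hcm : ∑ a ∈ t, w a • a = (∑ a ∈ t, w a) • z := by
    have : ∑ a ∈ t, ((w a : ℂ) * z - (w a : ℂ) * a) = 0 := by
      rw [← hkey]; congr 1; ext a; ring
    rw [Finset.sum_sub_distrib] at this
    have h2 : ∑ a ∈ t, (w a : ℂ) * a = (∑ a ∈ t, (w a : ℂ)) * z := by
      rw [Finset.sum_mul]
      have := sub_eq_zero.mp this
      rw [this]
    calc ∑ a ∈ t, w a • a = ∑ a ∈ t, (w a : ℂ) * a := by
          simp [Complex.real_smul]
      _ = (∑ a ∈ t, (w a : ℂ)) * z := h2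
      _ = (∑ a ∈ t, w a) • z := by push_cast [Complex.real_smul]; ring
  have := Finset.centerMass_mem_convexHull t hw0 hwpos
    (fun a ha => show (id a : ℂ) ∈ {w : ℂ | P.IsRoot w} from
      isRoot_of_mem_roots (Multiset.mem_toFinset.mp ha))
  rw [Finset.centerMass] at this
  simp only [id] at this
  rwa [hcm, smul_smul, inv_mul_cancel₀ (ne_of_gt hwpos), one_smul] at this
end

section
/- Let N ≥ 2 and let x₁ < x₂ < … < x_N and y₁ < y₂ < … < y_N be two families of N real numbers with x_i ≤ y_i for all 1 ≤ i ≤ N. Let P(X) = ∏_{i=1}^N (X − x_i) and Q(X) = ∏_{i=1}^N (X − y_i), and let x₁' < x₂' < … < x_{N−1}' and y₁' < y₂' < … < y_{N−1}' be the N−1 real roots of P' and Q' respectively, which satisfy x_i < x_i' < x_{i+1} and y_i < y_i' < y_{i+1} for all 1 ≤ i ≤ N−1. Then x_i' ≤ y_i' for all 1 ≤ i ≤ N−1. -/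
lemma deriv_prod_aux {m : ℕ} (x : Fin m → ℝ) (t : ℝ) (ht : ∀ j, t ≠ x j) :
    deriv (fun s => ∏ i, (s - x i)) t = (∏ i, (t - x i)) * ∑ j, (t - x j)⁻¹ := by
  have h : ∀ i ∈ Finset.univ, HasDerivAt (fun s => s - x i) 1 t := by
    intro i _
    simpa using (hasDerivAt_id t).sub_const (x i)
  have hd := (HasDerivAt.fun_finsetProd h).deriv
  rw [show (fun s => ∏ i, (s - x i)) = (∏ i ∈ Finset.univ, (fun s => s - x i) ·) from rfl, hd,
    Finset.mul_sum]
  refine Finset.sum_congr rfl fun i _ => ?_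
  have hne : t - x i ≠ 0 := sub_ne_zero.mpr (ht i)
  have := Finset.mul_prod_erase Finset.univ (fun j => t - x j) (Finset.mem_univ i)
  field_simp
  linear_combination this

lemma sum_inv_zero_aux {m : ℕ} (x : Fin m → ℝ) (P : ℝ → ℝ)
    (hP : ∀ t : ℝ, P t = ∏ i, (t - x i)) (t : ℝ) (ht : ∀ j, t ≠ x j)
    (h0 : deriv P t = 0) : ∑ j, (t - x j)⁻¹ = 0 := by
  have hPfun : P = fun s => ∏ i, (s - x i) := funext hP
  rw [hPfun, deriv_prod_aux x t ht] at h0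
  have hprod : (∏ i, (t - x i)) ≠ 0 :=
    Finset.prod_ne_zero_iff.mpr fun j _ => sub_ne_zero.mpr (ht j)
  exact (mul_eq_zero.mp h0).resolve_left hprod

/-- Discrete comparison principle for roots of real polynomials under
differentiation: if `x₁ < ⋯ < x_N` and `y₁ < ⋯ < y_N` with `xᵢ ≤ yᵢ`, and
`xᵢ'` (resp. `yᵢ'`) are the roots of `P'` (resp. `Q'`) interlacing the roots of
`P = ∏ (X - xᵢ)` (resp. `Q = ∏ (X - yᵢ)`), then `xᵢ' ≤ yᵢ'` for all `i`.
Here `N = n + 1 ≥ 2`. -/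
theorem discrete_comparison_principle (n : ℕ) (hn : 1 ≤ n)
    (x y : Fin (n + 1) → ℝ)
    (hx : StrictMono x) (hy : StrictMono y)
    (hxy : ∀ i, x i ≤ y i)
    (P Q : ℝ → ℝ)
    (hP : ∀ t : ℝ, P t = ∏ i, (t - x i))
    (hQ : ∀ t : ℝ, Q t = ∏ i, (t - y i))
    (x' y' : Fin n → ℝ)
    (hx' : ∀ i : Fin n,
      x i.castSucc < x' i ∧ x' i < x i.succ ∧ deriv P (x' i) = 0)
    (hy' : ∀ i : Fin n,
      y i.castSucc < y' i ∧ y' i < y i.succ ∧ deriv Q (y' i) = 0) :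
    ∀ i : Fin n, x' i ≤ y' i := by
  intro i
  by_contra hcon
  push_neg at hcon
  obtain ⟨hx1, hx2, hx3⟩ := hx' i
  obtain ⟨hy1, hy2, hy3⟩ := hy' i
  have hside : ∀ j : Fin (n + 1),
      (x j ≤ x i.castSucc ∧ y j ≤ y i.castSucc) ∨ (x i.succ ≤ x j ∧ y i.succ ≤ y j) := by
    intro j
    rcases le_or_gt (j : ℕ) (i : ℕ) with hj | hj
    · exact Or.inl ⟨hx.monotone (by simp [Fin.le_def, hj]),
        hy.monotone (by simp [Fin.le_def, hj])⟩
    · exact Or.inr ⟨hx.monotone (by simp [Fin.le_def]; omega),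
        hy.monotone (by simp [Fin.le_def]; omega)⟩
  have hylow : x i.castSucc < y' i := lt_of_le_of_lt (hxy _) hy1
  have hyhigh : y' i < x i.succ := hcon.trans hx2
  have hxne : ∀ j, x' i ≠ x j := by
    intro j
    rcases hside j with ⟨h1, _⟩ | ⟨h1, _⟩
    · exact ne_of_gt (lt_of_le_of_lt h1 hx1)
    · exact ne_of_lt (lt_of_lt_of_le hx2 h1)
  have hyxne : ∀ j, y' i ≠ x j := by
    intro j
    rcases hside j with ⟨h1, _⟩ | ⟨h1, _⟩
    · exact ne_of_gt (lt_of_le_of_lt h1 hylow)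
    · exact ne_of_lt (lt_of_lt_of_le hyhigh h1)
  have hyne : ∀ j, y' i ≠ y j := by
    intro j
    rcases hside j with ⟨_, h2⟩ | ⟨_, h2⟩
    · exact ne_of_gt (lt_of_le_of_lt h2 hy1)
    · exact ne_of_lt (lt_of_lt_of_le hy2 h2)
  have hfx : ∑ j, (x' i - x j)⁻¹ = 0 := sum_inv_zero_aux x P hP _ hxne hx3
  have hgy : ∑ j, (y' i - y j)⁻¹ = 0 := sum_inv_zero_aux y Q hQ _ hyne hy3
  -- f(y' i) ≤ g(y' i)
  have hle : ∑ j, (y' i - x j)⁻¹ ≤ ∑ j, (y' i - y j)⁻¹ := by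
    refine Finset.sum_le_sum fun j _ => ?_
    rcases hside j with ⟨h1, h2⟩ | ⟨h1, h2⟩
    · have hb : 0 < y' i - y j := sub_pos.mpr (lt_of_le_of_lt h2 hy1)
      exact inv_anti₀ hb (by linarith [hxy j])
    · have ha : y' i - x j < 0 := sub_neg.mpr (lt_of_lt_of_le hyhigh h1)
      have hb : y' i - y j < 0 := sub_neg.mpr (lt_of_lt_of_le hy2 h2)
      exact (inv_le_inv_of_neg ha hb).mpr (by linarith [hxy j])
  -- f strictly decreasing: f(x' i) < f(y' i)
  have hlt : ∑ j, (x' i - x j)⁻¹ < ∑ j, (y' i - x j)⁻¹ := by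
    refine Finset.sum_lt_sum_of_nonempty Finset.univ_nonempty fun j _ => ?_
    rcases hside j with ⟨h1, _⟩ | ⟨h1, _⟩
    · have hb : 0 < y' i - x j := sub_pos.mpr (lt_of_le_of_lt h1 hylow)
      exact inv_strictAnti₀ hb (by linarith)
    · have ha : x' i - x j < 0 := sub_neg.mpr (lt_of_lt_of_le hx2 h1)
      have hb : y' i - x j < 0 := sub_neg.mpr (lt_of_lt_of_le hyhigh h1)
      exact (inv_lt_inv_of_neg ha hb).mpr (by linarith)
  linarith
end

section
/- Let N ≥ 1, a ∈ ℝ, and let a ≤ x₀ < x₁ < … < x_{2N−1} < a + 2π and a ≤ y₀ < y₁ < … < y_{2N−1} < a + 2π be two families of 2N real numbers. Extend them periodically by x_k = x_{k mod 2N} + 2π⌊k/(2N)⌋ and y_k = y_{k mod 2N} + 2π⌊k/(2N)⌋ for all k ∈ ℤ. Let P(x) = ∏_{i=0}^{2N−1} sin((x − x_i)/2) and Q(x) = ∏_{i=0}^{2N−1} sin((x − y_i)/2), and for each i ∈ ℤ let x_i' be the unique root of P' in (x_i, x_{i+1}) and y_i' the unique root of Q' in (y_i, y_{i+1}). If x_i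 ≤ y_i for all i ∈ ℤ, then x_i' ≤ y_i' for all i ∈ ℤ. -/
open Real


/-- cotangent (as cos/sin) is strictly decreasing on (0, π). -/
private lemma my_ct_anti {a b : ℝ} (h0 : 0 < a) (hab : a < b) (hb : b < π) :
    Real.cos b / Real.sin b < Real.cos a / Real.sin a := by
  have ha' : a < π := hab.trans hb
  have h0' : 0 < b := h0.trans hab
  have hmem : ∀ c : ℝ, 0 < c → c < π → π / 2 - c ∈ Set.Ioo (-(π/2)) (π/2) := by
    intro c hc1 hc2
    constructor <;> [linarith; linarith]
  have := Real.strictMonoOn_tan (hmem b h0' hb) (hmem a h0 ha') (by linarith)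
  rwa [Real.tan_eq_sin_div_cos, Real.tan_eq_sin_div_cos, Real.sin_pi_div_two_sub,
    Real.cos_pi_div_two_sub, Real.sin_pi_div_two_sub, Real.cos_pi_div_two_sub] at this

private lemma my_ct_shift (s : ℝ) (m : ℤ) :
    Real.cos (s - m * π) / Real.sin (s - m * π) = Real.cos s / Real.sin s := by
  rw [Real.cos_sub_int_mul_pi, Real.sin_sub_int_mul_pi,
    mul_div_mul_left _ _ (zpow_ne_zero m (by norm_num : (-1:ℝ) ≠ 0))]

private lemma my_per_gen (N : ℕ) (x : ℤ → ℝ) (hxper : ∀ k : ℤ, x (k + 2 * N) = x k + 2 * π)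
    (m k : ℤ) : x (k + 2 * N * m) = x k + m * (2 * π) := by
  induction m using Int.induction_on with
  | zero => simp
  | succ n ih =>
    have h1 : k + 2 * N * ((n:ℤ) + 1) = (k + 2 * N * n) + 2 * N := by ring
    rw [h1, hxper, ih]; push_cast; ring
  | pred n ih =>
    have h1 : k + 2 * N * (-(n:ℤ) - 1) + 2 * N = k + 2 * N * (-(n:ℤ)) := by ring
    have h2 := hxper (k + 2 * N * (-(n:ℤ) - 1))
    rw [h1, ih] at h2
    push_cast at h2 ⊢
    linarith

/-- arithmetic: representative in window (i - 2N, i]. -/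
private lemma my_rep (N : ℕ) (hN : 1 ≤ N) (i j : ℤ) :
    ∃ r q : ℤ, r = j + 2 * N * q ∧ i - 2 * N < r ∧ r ≤ i := by
  have h2N : (0:ℤ) < 2 * N := by positivity
  refine ⟨j + 2 * N * ((i - j) / (2 * N)), (i - j) / (2 * N), rfl, ?_, ?_⟩
  · have := Int.emod_lt_of_pos (i - j) h2N
    have h := Int.mul_ediv_add_emod (i - j) (2 * N)
    linarith
  · have := Int.emod_nonneg (i - j) (ne_of_gt h2N)
    have h := Int.mul_ediv_add_emod (i - j) (2 * N)
    linarith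

private lemma my_window (N : ℕ) (x : ℤ → ℝ) (hxmono : StrictMono x)
    (hxper : ∀ k : ℤ, x (k + 2 * N) = x k + 2 * π)
    {i r : ℤ} (hr1 : i - 2 * N < r) (hr2 : r ≤ i) {t : ℝ}
    (ht : t ∈ Set.Ioo (x i) (x (i+1))) :
    0 < (t - x r) / 2 ∧ (t - x r) / 2 < π := by
  have h1 : x r ≤ x i := hxmono.monotone hr2
  have h2 : x (i+1) ≤ x (r + 2 * N) := hxmono.monotone (by omega)
  rw [hxper r] at h2
  obtain ⟨ha, hb⟩ := ht
  constructor <;> [linarith; linarith]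

private lemma my_ct_rep (N : ℕ) (x : ℤ → ℝ)
    (hxper : ∀ k : ℤ, x (k + 2 * N) = x k + 2 * π)
    (j r q : ℤ) (hrq : r = j + 2 * N * q) (t : ℝ) :
    Real.cos ((t - x j)/2) / Real.sin ((t - x j)/2)
      = Real.cos ((t - x r)/2) / Real.sin ((t - x r)/2) := by
  have hx : x r = x j + q * (2*π) := by rw [hrq]; rw [my_per_gen N x hxper q j]
  have h : (t - x r)/2 = (t - x j)/2 - q * π := by rw [hx]; ring
  rw [h, my_ct_shift]

private lemma my_sin_ne (N : ℕ) (x : ℤ → ℝ)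
    (hxper : ∀ k : ℤ, x (k + 2 * N) = x k + 2 * π)
    (j r q : ℤ) (hrq : r = j + 2 * N * q) (t : ℝ)
    (h0 : 0 < (t - x r)/2) (hπ : (t - x r)/2 < π) : Real.sin ((t - x j)/2) ≠ 0 := by
  have hx : x r = x j + q * (2*π) := by rw [hrq]; rw [my_per_gen N x hxper q j]
  have he : (t - x j)/2 = (t - x r)/2 - (-q : ℤ) * π := by rw [hx]; push_cast; ring
  rw [he, Real.sin_sub_int_mul_pi]
  exact mul_ne_zero (zpow_ne_zero _ (by norm_num))
    (ne_of_gt (Real.sin_pos_of_pos_of_lt_pi h0 hπ))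

private lemma my_deriv (N : ℕ) (c : ℤ → ℝ) (P : ℝ → ℝ)
    (hP : ∀ t : ℝ, P t = ∏ j ∈ Finset.range (2 * N), Real.sin ((t - c (j:ℤ)) / 2)) (t : ℝ)
    (hne : ∀ j ∈ Finset.range (2 * N), Real.sin ((t - c (j:ℤ)) / 2) ≠ 0) :
    deriv P t = P t * (∑ j ∈ Finset.range (2 * N),
      Real.cos ((t - c (j:ℤ)) / 2) / Real.sin ((t - c (j:ℤ)) / 2)) / 2 := by
  have hder : ∀ j ∈ Finset.range (2*N),
      HasDerivAt (fun s => Real.sin ((s - c (j:ℤ)) / 2))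
        (Real.cos ((t - c (j:ℤ))/2) * (1/2)) t := by
    intro j _
    have h1 : HasDerivAt (fun s : ℝ => (s - c (j:ℤ)) / 2) (1/2) t := by
      simpa using ((hasDerivAt_id t).sub_const (c (j:ℤ))).div_const 2
    exact (Real.hasDerivAt_sin _).comp t h1
  have hPfun : P = fun s => ∏ j ∈ Finset.range (2*N), Real.sin ((s - c (j:ℤ))/2) :=
    funext hP
  have hd : deriv P t = ∑ j ∈ Finset.range (2*N),
      (∏ k ∈ (Finset.range (2*N)).erase j, Real.sin ((t - c (k:ℤ))/2)) •
        (Real.cos ((t - c (j:ℤ))/2) * (1/2)) := by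
    rw [hPfun]; exact (HasDerivAt.fun_finsetProd hder).deriv
  rw [hd, hP t, Finset.mul_sum, Finset.sum_div]
  refine Finset.sum_congr rfl fun j hj => ?_
  rw [smul_eq_mul, ← Finset.mul_prod_erase _ _ hj]
  field_simp [hne j hj]

private lemma my_key (N : ℕ) (hN : 1 ≤ N) (x : ℤ → ℝ) (hxmono : StrictMono x)
    (hxper : ∀ k : ℤ, x (k + 2 * N) = x k + 2 * π)
    (P : ℝ → ℝ)
    (hP : ∀ t : ℝ, P t = ∏ j ∈ Finset.range (2 * N), Real.sin ((t - x (j:ℤ)) / 2))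
    (i : ℤ) {t : ℝ} (ht : t ∈ Set.Ioo (x i) (x (i+1))) (hdt : deriv P t = 0) :
    ∑ j ∈ Finset.range (2 * N),
      Real.cos ((t - x (j:ℤ)) / 2) / Real.sin ((t - x (j:ℤ)) / 2) = 0 := by
  have hne : ∀ j ∈ Finset.range (2 * N), Real.sin ((t - x (j:ℤ)) / 2) ≠ 0 := by
    intro j _
    obtain ⟨r, q, hrq, hr1, hr2⟩ := my_rep N hN i (j : ℤ)
    obtain ⟨h0, hπ⟩ := my_window N x hxmono hxper hr1 hr2 ht
    exact my_sin_ne N x hxper (j : ℤ) r q hrq t h0 hπ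
  have hPne : P t ≠ 0 := by
    rw [hP t]; exact Finset.prod_ne_zero_iff.mpr hne
  have hd := my_deriv N x P hP t hne
  rw [hdt] at hd
  have := hd.symm
  rcases mul_eq_zero.mp (by linarith [this] : P t * (∑ j ∈ Finset.range (2 * N),
      Real.cos ((t - x (j:ℤ)) / 2) / Real.sin ((t - x (j:ℤ)) / 2)) = 0) with h | h
  · exact absurd h hPne
  · exact h

/-- Periodic discrete comparison principle: given two `2N`-periodic (up to `2π`)
strictly increasing families `(xᵢ)_{i∈ℤ}` and `(yᵢ)_{i∈ℤ}` obtained by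
periodizing `2N` points of an interval `[a, a + 2π)`, with `xᵢ ≤ yᵢ` for all
`i`, the unique roots `xᵢ'` of `P'` in `(xᵢ, x_{i+1})` and `yᵢ'` of `Q'` in
`(yᵢ, y_{i+1})`, where `P(t) = ∏_{i=0}^{2N-1} sin((t - xᵢ)/2)` and
`Q(t) = ∏_{i=0}^{2N-1} sin((t - yᵢ)/2)`, satisfy `xᵢ' ≤ yᵢ'` for all `i ∈ ℤ`. -/
theorem periodic_discrete_comparison_principle (N : ℕ) (hN : 1 ≤ N) (a : ℝ)
    (x y : ℤ → ℝ)
    (hxmono : StrictMono x) (hymono : StrictMono y)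
    (hxper : ∀ k : ℤ, x (k + 2 * N) = x k + 2 * π)
    (hyper : ∀ k : ℤ, y (k + 2 * N) = y k + 2 * π)
    (hx0 : a ≤ x 0) (hxlt : x (2 * (N : ℤ) - 1) < a + 2 * π)
    (hy0 : a ≤ y 0) (hylt : y (2 * (N : ℤ) - 1) < a + 2 * π)
    (P Q : ℝ → ℝ)
    (hP : ∀ t : ℝ, P t = ∏ i ∈ Finset.range (2 * N), Real.sin ((t - x (i : ℤ)) / 2))
    (hQ : ∀ t : ℝ, Q t = ∏ i ∈ Finset.range (2 * N), Real.sin ((t - y (i : ℤ)) / 2))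
    (x' y' : ℤ → ℝ)
    (hx' : ∀ i : ℤ, x' i ∈ Set.Ioo (x i) (x (i + 1)) ∧ deriv P (x' i) = 0 ∧
      ∀ z ∈ Set.Ioo (x i) (x (i + 1)), deriv P z = 0 → z = x' i)
    (hy' : ∀ i : ℤ, y' i ∈ Set.Ioo (y i) (y (i + 1)) ∧ deriv Q (y' i) = 0 ∧
      ∀ z ∈ Set.Ioo (y i) (y (i + 1)), deriv Q z = 0 → z = y' i)
    (hxy : ∀ i : ℤ, x i ≤ y i) :
    ∀ i : ℤ, x' i ≤ y' i := by
  intro i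
  obtain ⟨hxI, hxD, -⟩ := hx' i
  obtain ⟨hyI, hyD, -⟩ := hy' i
  by_cases hc : x (i+1) ≤ y' i
  · exact (hxI.2.trans_le hc).le
  push_neg at hc
  have htx : y' i ∈ Set.Ioo (x i) (x (i+1)) := ⟨lt_of_le_of_lt (hxy i) hyI.1, hc⟩
  have hSx : ∑ j ∈ Finset.range (2 * N),
      Real.cos ((x' i - x (j:ℤ)) / 2) / Real.sin ((x' i - x (j:ℤ)) / 2) = 0 :=
    my_key N hN x hxmono hxper P hP i hxI hxD
  have hTy : ∑ j ∈ Finset.range (2 * N),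
      Real.cos ((y' i - y (j:ℤ)) / 2) / Real.sin ((y' i - y (j:ℤ)) / 2) = 0 :=
    my_key N hN y hymono hyper Q hQ i hyI hyD
  have hcomp : ∑ j ∈ Finset.range (2 * N),
      Real.cos ((y' i - x (j:ℤ)) / 2) / Real.sin ((y' i - x (j:ℤ)) / 2) ≤ 0 := by
    rw [← hTy]
    apply Finset.sum_le_sum
    intro j _
    obtain ⟨r, q, hrq, hr1, hr2⟩ := my_rep N hN i (j : ℤ)
    obtain ⟨hx0', hxπ⟩ := my_window N x hxmono hxper hr1 hr2 htx
    obtain ⟨hy0', hyπ⟩ := my_window N y hymono hyper hr1 hr2 hyI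
    rw [my_ct_rep N x hxper (j:ℤ) r q hrq (y' i), my_ct_rep N y hyper (j:ℤ) r q hrq (y' i)]
    rcases eq_or_lt_of_le (hxy r) with he | hlt
    · rw [he]
    · exact le_of_lt (my_ct_anti hy0' (by linarith) hxπ)
  by_contra hcon
  push_neg at hcon
  have hstrict : ∑ j ∈ Finset.range (2 * N),
      Real.cos ((x' i - x (j:ℤ)) / 2) / Real.sin ((x' i - x (j:ℤ)) / 2)
      < ∑ j ∈ Finset.range (2 * N),
      Real.cos ((y' i - x (j:ℤ)) / 2) / Real.sin ((y' i - x (j:ℤ)) / 2) := by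
    apply Finset.sum_lt_sum_of_nonempty (Finset.nonempty_range_iff.mpr (by omega))
    intro j _
    obtain ⟨r, q, hrq, hr1, hr2⟩ := my_rep N hN i (j : ℤ)
    obtain ⟨hy0', hyπ⟩ := my_window N x hxmono hxper hr1 hr2 htx
    obtain ⟨hx0', hxπ⟩ := my_window N x hxmono hxper hr1 hr2 hxI
    rw [my_ct_rep N x hxper (j:ℤ) r q hrq (x' i), my_ct_rep N x hxper (j:ℤ) r q hrq (y' i)]
    exact my_ct_anti hy0' (by linarith) hxπ
  rw [hSx] at hstrict
  linarith
end

section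
/- Let N ≥ 1 be an integer, δ > 0, θ₀ ∈ ℝ, I_δ = (θ₀ − δ, θ₀ + δ), and let φ : ℝ → ℝ be twice continuously differentiable with K_δ := inf_{x ∈ I_δ} φ'(x) > 0 and M := sup_{x ∈ I_δ} |φ''(x)| < ∞. Let E = { i ∈ ℤ : i/(2N) ∈ φ(I_δ) }, for i ∈ E let μ^i ∈ I_δ be the unique point with φ(μ^i) = i/(2N), fix i₀ ∈ E, and for j ∈ E set μ̃^j := μ^{i₀} + (j − i₀)/(2N·φ'(μ^{i₀})). Then for all j ∈ E: (i) |μ^j − μ̃^j| ≤ (M/K_δ³)·|i₀ − j|²/(8N²); (ii) if j+1 ∈ E then |μ^{j+1} − μ^j − 1/(2N·φ'(μ^j))| ≤ (M/K_δ³)/(8N²); (iii) |μ^j − μ̃^j| ≤ (M/K_δ³)·|j − i₀|/(8N²) + (M/K_δ³)·|i₀ − j|²/(8N²). -/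
open Real intervalIntegral

lemma my_deriv_facts {f : ℝ → ℝ} (hf : ContDiff ℝ 2 f) :
    Differentiable ℝ f ∧ Differentiable ℝ (deriv f) := by
  have h : ContDiff ℝ ((1 : WithTop ℕ∞) + 1) f := hf
  rw [contDiff_succ_iff_deriv] at h
  exact ⟨h.1, h.2.2.differentiable one_ne_zero⟩

lemma my_lower_incr {f : ℝ → ℝ} (hf : ContDiff ℝ 2 f) {s : Set ℝ} (hs : Convex ℝ s)
    {K : ℝ} (hKle : ∀ x ∈ s, K ≤ deriv f x) {a b : ℝ} (ha : a ∈ s) (hb : b ∈ s)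
    (hab : a ≤ b) : K * (b - a) ≤ f b - f a := by
  obtain ⟨hd1, hd2⟩ := my_deriv_facts hf
  have hcont : Continuous (deriv f) := hd2.continuous
  have hIcc : Set.Icc a b ⊆ s := hs.ordConnected.out ha hb
  have hftc : ∫ x in a..b, deriv f x = f b - f a :=
    intervalIntegral.integral_deriv_eq_sub (fun x _ => hd1 x) (hcont.intervalIntegrable a b)
  have hmono : ∫ x in a..b, K ≤ ∫ x in a..b, deriv f x := by
    apply intervalIntegral.integral_mono_on hab intervalIntegrable_const
      (hcont.intervalIntegrable a b)
    exact fun t ht => hKle t (hIcc ht)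
  rw [intervalIntegral.integral_const, smul_eq_mul] at hmono
  rw [← hftc]
  linarith [hmono]

lemma my_taylor1 {f : ℝ → ℝ} (hf : ContDiff ℝ 2 f) {s : Set ℝ} (hs : Convex ℝ s)
    {M : ℝ} (hM : ∀ x ∈ s, |deriv (deriv f) x| ≤ M) {a b : ℝ} (ha : a ∈ s) (hb : b ∈ s) :
    |f b - f a - deriv f a * (b - a)| ≤ M / 2 * (b - a) ^ 2 := by
  obtain ⟨hd1, hd2⟩ := my_deriv_facts hf
  have hcont : Continuous (deriv f) := hd2.continuous
  have hlip : ∀ t ∈ s, |deriv f t - deriv f a| ≤ M * |t - a| := by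
    intro t ht
    have := Convex.norm_image_sub_le_of_norm_deriv_le (f := deriv f)
      (fun x _ => hd2 x) (fun x hx => by simpa [Real.norm_eq_abs] using hM x hx) hs ha ht
    simpa [Real.norm_eq_abs] using this
  have hg : ∀ t : ℝ, HasDerivAt (fun x => f x - f a - deriv f a * (x - a))
      (deriv f t - deriv f a) t := by
    intro t
    have h1 : HasDerivAt f (deriv f t) t := (hd1 t).hasDerivAt
    have h2 : HasDerivAt (fun x : ℝ => deriv f a * (x - a)) (deriv f a) t := by
      simpa using ((hasDerivAt_id t).sub_const a).const_mul (deriv f a)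
    exact (h1.sub_const (f a)).sub h2
  have hint : Continuous (fun t => deriv f t - deriv f a) := hcont.sub continuous_const
  have hftc : ∫ t in a..b, (deriv f t - deriv f a) = f b - f a - deriv f a * (b - a) := by
    rw [intervalIntegral.integral_eq_sub_of_hasDerivAt (fun t _ => hg t)
      (hint.intervalIntegrable a b)]
    ring
  rw [← hftc]
  rcases le_total a b with hab | hab
  · calc |∫ t in a..b, (deriv f t - deriv f a)| ≤ ∫ t in a..b, |deriv f t - deriv f a| := by
          simpa [Real.norm_eq_abs] using
            intervalIntegral.norm_integral_le_integral_norm (f := fun t => deriv f t - deriv f a) hab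
      _ ≤ ∫ t in a..b, M * (t - a) := by
          apply intervalIntegral.integral_mono_on hab (hint.abs.intervalIntegrable a b)
            ((continuous_const.mul (continuous_id'.sub continuous_const)).intervalIntegrable a b)
          intro t ht
          have h1 := hlip t (hs.ordConnected.out ha hb ht)
          have : |t - a| = t - a := abs_of_nonneg (by linarith [ht.1])
          show |deriv f t - deriv f a| ≤ M * (t - a)
          linarith [this ▸ h1]
      _ = M / 2 * (b - a) ^ 2 := by
          rw [intervalIntegral.integral_const_mul,
            intervalIntegral.integral_sub (continuous_id'.intervalIntegrable a b)
              (intervalIntegrable_const), integral_id, intervalIntegral.integral_const]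
          simp only [smul_eq_mul]
          ring
  · rw [intervalIntegral.integral_symm b a, abs_neg]
    calc |∫ t in b..a, (deriv f t - deriv f a)| ≤ ∫ t in b..a, |deriv f t - deriv f a| := by
          simpa [Real.norm_eq_abs] using
            intervalIntegral.norm_integral_le_integral_norm (f := fun t => deriv f t - deriv f a) hab
      _ ≤ ∫ t in b..a, M * (a - t) := by
          apply intervalIntegral.integral_mono_on hab (hint.abs.intervalIntegrable b a)
            ((continuous_const.mul (continuous_const.sub continuous_id')).intervalIntegrable b a)
          intro t ht
          have h1 := hlip t (hs.ordConnected.out hb ha ht)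
          have : |t - a| = a - t := by rw [abs_sub_comm]; exact abs_of_nonneg (by linarith [ht.2])
          show |deriv f t - deriv f a| ≤ M * (a - t)
          linarith [this ▸ h1]
      _ = M / 2 * (b - a) ^ 2 := by
          rw [intervalIntegral.integral_const_mul,
            intervalIntegral.integral_sub (intervalIntegrable_const)
              (continuous_id'.intervalIntegrable b a), integral_id, intervalIntegral.integral_const]
          simp only [smul_eq_mul]
          ring

lemma my_key_step {f : ℝ → ℝ} (hf : ContDiff ℝ 2 f) {s : Set ℝ} (hs : Convex ℝ s)
    {K M : ℝ} (hK : 0 < K) (hKle : ∀ x ∈ s, K ≤ deriv f x)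
    (hMle : ∀ x ∈ s, |deriv (deriv f) x| ≤ M)
    {a b : ℝ} (ha : a ∈ s) (hb : b ∈ s) :
    |b - a - (f b - f a) / deriv f a| ≤ M / K ^ 3 * (f b - f a) ^ 2 / 2 := by
  have hM0 : 0 ≤ M := le_trans (abs_nonneg _) (hMle a ha)
  have hca : K ≤ deriv f a := hKle a ha
  have hc0 : 0 < deriv f a := lt_of_lt_of_le hK hca
  have hdist : K * |b - a| ≤ |f b - f a| := by
    rcases le_total a b with hab | hab
    · have h := my_lower_incr hf hs hKle ha hb hab
      rw [abs_of_nonneg (by linarith : (0:ℝ) ≤ b - a)]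
      rw [abs_of_nonneg (by nlinarith : (0:ℝ) ≤ f b - f a)]
      exact h
    · have h := my_lower_incr hf hs hKle hb ha hab
      rw [abs_of_nonpos (by linarith : b - a ≤ 0)]
      rw [abs_of_nonpos (by nlinarith : f b - f a ≤ 0)]
      linarith
  have htay := my_taylor1 hf hs hMle ha hb
  have hsq : (b - a) ^ 2 ≤ (f b - f a) ^ 2 / K ^ 2 := by
    rw [le_div_iff₀ (by positivity)]
    calc (b - a) ^ 2 * K ^ 2 = (K * |b - a|) ^ 2 := by rw [mul_pow, sq_abs]; ring
      _ ≤ |f b - f a| ^ 2 := by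
          apply pow_le_pow_left₀ (by positivity) hdist
      _ = (f b - f a) ^ 2 := sq_abs _
  have he : b - a - (f b - f a) / deriv f a
      = -((f b - f a - deriv f a * (b - a)) / deriv f a) := by
    field_simp
    ring
  rw [he, abs_neg, abs_div, abs_of_pos hc0]
  calc |f b - f a - deriv f a * (b - a)| / deriv f a
      ≤ (M / 2 * (b - a) ^ 2) / deriv f a := by gcongr
    _ ≤ (M / 2 * (b - a) ^ 2) / K := by gcongr
    _ ≤ (M / 2 * ((f b - f a) ^ 2 / K ^ 2)) / K := by
          apply div_le_div_of_nonneg_right ?_ hK.le |>.trans_eq rfl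
          exact mul_le_mul_of_nonneg_left hsq (by positivity)
    _ = M / K ^ 3 * (f b - f a) ^ 2 / 2 := by
          field_simp
          try ring
          try exact Or.inl trivial

/-- Linearization estimates for the preimages of grid points: with `φ` of class
`C²`, `K_δ := inf_{I_δ} φ' > 0` and `M := sup_{I_δ} |φ''| < ∞` on
`I_δ = (θ₀-δ, θ₀+δ)`, `μ^i = φ⁻¹(i/(2N)) ∈ I_δ`, and
`μ̃^j := μ^{i₀} + (j - i₀)/(2N φ'(μ^{i₀}))`, one has, for all admissible `j`:
(i) `|μ^j - μ̃^j| ≤ (M/K_δ³)·|i₀-j|²/(8N²)`;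
(ii) if `j+1` is admissible, `|μ^{j+1} - μ^j - 1/(2N φ'(μ^j))| ≤ (M/K_δ³)/(8N²)`;
(iii) `|μ^j - μ̃^j| ≤ (M/K_δ³)·|j-i₀|/(8N²) + (M/K_δ³)·|i₀-j|²/(8N²)`. -/
theorem grid_preimage_linearization (N : ℕ) (hN : 1 ≤ N) (δ θ₀ : ℝ) (hδ : 0 < δ)
    (φ : ℝ → ℝ) (hφ : ContDiff ℝ 2 φ)
    (Kδ : ℝ) (hKδ : Kδ = sInf (deriv φ '' Set.Ioo (θ₀ - δ) (θ₀ + δ)))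
    (hKpos : 0 < Kδ)
    (M : ℝ)
    (hM : M = sSup ((fun x => |deriv (deriv φ) x|) '' Set.Ioo (θ₀ - δ) (θ₀ + δ)))
    (hMbdd : BddAbove ((fun x => |deriv (deriv φ) x|) '' Set.Ioo (θ₀ - δ) (θ₀ + δ)))
    (μ : ℤ → ℝ)
    (hμ : ∀ i : ℤ, (i : ℝ) / (2 * N) ∈ φ '' Set.Ioo (θ₀ - δ) (θ₀ + δ) →
      μ i ∈ Set.Ioo (θ₀ - δ) (θ₀ + δ) ∧ φ (μ i) = (i : ℝ) / (2 * N))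
    (i₀ : ℤ) (hi₀ : (i₀ : ℝ) / (2 * N) ∈ φ '' Set.Ioo (θ₀ - δ) (θ₀ + δ))
    (μt : ℤ → ℝ)
    (hμt : ∀ j : ℤ, μt j = μ i₀ + ((j : ℝ) - (i₀ : ℝ)) / (2 * N * deriv φ (μ i₀)))
    (j : ℤ) (hj : (j : ℝ) / (2 * N) ∈ φ '' Set.Ioo (θ₀ - δ) (θ₀ + δ)) :
    |μ j - μt j| ≤ (M / Kδ ^ 3) * |(i₀ : ℝ) - (j : ℝ)| ^ 2 / (8 * N ^ 2) ∧
      (((j : ℝ) + 1) / (2 * N) ∈ φ '' Set.Ioo (θ₀ - δ) (θ₀ + δ) →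
        |μ (j + 1) - μ j - 1 / (2 * N * deriv φ (μ j))| ≤ (M / Kδ ^ 3) / (8 * N ^ 2)) ∧
      |μ j - μt j| ≤ (M / Kδ ^ 3) * |(j : ℝ) - (i₀ : ℝ)| / (8 * N ^ 2) +
        (M / Kδ ^ 3) * |(i₀ : ℝ) - (j : ℝ)| ^ 2 / (8 * N ^ 2) := by
  have hconv : Convex ℝ (Set.Ioo (θ₀ - δ) (θ₀ + δ)) := convex_Ioo _ _
  have hθ : θ₀ ∈ Set.Ioo (θ₀ - δ) (θ₀ + δ) := by constructor <;> linarith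
  have hKle : ∀ x ∈ Set.Ioo (θ₀ - δ) (θ₀ + δ), Kδ ≤ deriv φ x := by
    intro x hx
    by_cases hbb : BddBelow (deriv φ '' Set.Ioo (θ₀ - δ) (θ₀ + δ))
    · rw [hKδ]; exact csInf_le hbb ⟨x, hx, rfl⟩
    · rw [hKδ, Real.sInf_of_not_bddBelow hbb] at hKpos
      exact absurd hKpos (lt_irrefl 0)
  have hMle : ∀ x ∈ Set.Ioo (θ₀ - δ) (θ₀ + δ), |deriv (deriv φ) x| ≤ M := by
    intro x hx; rw [hM]; exact le_csSup hMbdd ⟨x, hx, rfl⟩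
  have hM0 : 0 ≤ M := le_trans (abs_nonneg _) (hMle θ₀ hθ)
  have hNR : (1 : ℝ) ≤ (N : ℝ) := by exact_mod_cast hN
  have hNne : (N : ℝ) ≠ 0 := by linarith
  have hKne : Kδ ≠ 0 := ne_of_gt hKpos
  obtain ⟨hm0, he0⟩ := hμ i₀ hi₀
  obtain ⟨hmj, hej⟩ := hμ j hj
  have h1 := my_key_step hφ hconv hKpos hKle hMle hm0 hmj
  rw [he0, hej] at h1
  have e1 : μ j - μt j
      = μ j - μ i₀ - ((j : ℝ) / (2 * N) - (i₀ : ℝ) / (2 * N)) / deriv φ (μ i₀) := by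
    rw [hμt j, div_sub_div_same, div_div]
    ring
  have e2 : M / Kδ ^ 3 * ((j : ℝ) / (2 * N) - (i₀ : ℝ) / (2 * N)) ^ 2 / 2
      = (M / Kδ ^ 3) * |(i₀ : ℝ) - (j : ℝ)| ^ 2 / (8 * N ^ 2) := by
    rw [sq_abs]
    field_simp
    ring
  have part1 : |μ j - μt j| ≤ (M / Kδ ^ 3) * |(i₀ : ℝ) - (j : ℝ)| ^ 2 / (8 * N ^ 2) := by
    rw [e1, ← e2]; exact h1
  refine ⟨part1, ?_, ?_⟩
  · intro hj1
    have hj1' : ((j + 1 : ℤ) : ℝ) / (2 * N) ∈ φ '' Set.Ioo (θ₀ - δ) (θ₀ + δ) := by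
      push_cast; exact hj1
    obtain ⟨hm1, he1'⟩ := hμ (j + 1) hj1'
    have h2 := my_key_step hφ hconv hKpos hKle hMle hmj hm1
    rw [he1', hej] at h2
    have e3 : ((j + 1 : ℤ) : ℝ) / (2 * N) - (j : ℝ) / (2 * N) = 1 / (2 * N) := by
      rw [div_sub_div_same]; push_cast; norm_num
    rw [e3, div_div] at h2
    have e5 : M / Kδ ^ 3 * (1 / (2 * N)) ^ 2 / 2 = (M / Kδ ^ 3) / (8 * N ^ 2) := by
      field_simp
      try ring
      try exact Or.inl trivial
    rw [e5] at h2
    exact h2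
  · have h0 : 0 ≤ (M / Kδ ^ 3) * |(j : ℝ) - (i₀ : ℝ)| / (8 * N ^ 2) := by positivity
    linarith [part1]
end
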